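/- arXiv:2601.19200 — 2 statements merged into one kernel-verified Lean document; each statement's English description precedes it below -/
import Mathlib

section
/- Conversely, if τ is a hereditary torsion theory on left A-modules such that every higher Ω-derivation of order n on every A-module preserves the torsion submodule, then the Gabriel filter ℒ corresponding to τ is Ω-invariant of order n: for every I ∈ ℒ there exists K ∈ ℒ with Ω_j(K) ⊆ I for all j = 0,1,…,n. -/
universe u

/-- Annihilator of an element as a left ideal. -/
def annIdeal (A : Type u) [Ring A] {M : Type u} [AddCommGroup M] [Module A M] (m : M) :
    Submodule A A :=
  LinearMap.ker (LinearMap.toSpanSingleton A M m)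

namespace Stmt16

variable {A : Type u} [Ring A]

def wt (w : List ℕ) : ℕ := w.sum + w.length

def cw (k : ℕ) (w : List ℕ) : List ℕ := if k = 0 then w else k :: w

lemma wt_lt_cons (k : ℕ) (w : List ℕ) : wt w < wt (k :: w) := by
  simp [wt]; omega

lemma wt_cw_lt' (k i : ℕ) (w : List ℕ) : wt (cw (k - 1 - i) w) < wt (k :: w) := by
  unfold cw; split <;> simp [wt] <;> omega

lemma wt_cw_lt {m k : ℕ} (h : m < k) (w : List ℕ) : wt (cw m w) < wt (k :: w) := by
  unfold cw; split <;> simp [wt] <;> omega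

section Defs

variable (n : ℕ) (Ω : ℕ → A → A) (L : Submodule A A)

noncomputable def psi : (w : List ℕ) → A → (A ⧸ L) → (List ℕ →₀ A ⧸ L)
  | [], a, x => Finsupp.single [] (a • x)
  | k :: w, a, x =>
      Finsupp.mapDomain (k :: ·) (psi w a x) -
        (if 1 ≤ k ∧ k ≤ n then
          ∑ i ∈ Finset.range k, psi (cw (k - 1 - i) w) (Ω (i + 1) a) x
        else 0)
  termination_by w => wt w
  decreasing_by
  · exact wt_lt_cons _ _
  · exact wt_cw_lt' _ _ _

lemma psi_nil (a : A) (x : A ⧸ L) : psi n Ω L [] a x = Finsupp.single [] (a • x) := by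
  rw [psi]

lemma psi_cons (k : ℕ) (w : List ℕ) (a : A) (x : A ⧸ L) :
    psi n Ω L (k :: w) a x =
      Finsupp.mapDomain (k :: ·) (psi n Ω L w a x) -
        (if 1 ≤ k ∧ k ≤ n then
          ∑ i ∈ Finset.range k, psi n Ω L (cw (k - 1 - i) w) (Ω (i + 1) a) x
        else 0) := by
  rw [psi]

variable {n Ω L}

/-- strong-induction helper on weight -/
lemma wt_rec {P : List ℕ → Prop}
    (h : ∀ w, (∀ v, wt v < wt w → P v) → P w) : ∀ w, P w := by
  have : ∀ N w, wt w ≤ N → P w := by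
    intro N
    induction N with
    | zero => intro w hw; exact h w (fun v hv => absurd (lt_of_lt_of_le hv hw) (Nat.not_lt_zero _))
    | succ N ih =>
      intro w hw
      exact h w (fun v hv => ih v (by omega))
  exact fun w => this (wt w) w le_rfl

lemma psi_addx : ∀ (w : List ℕ) (a : A) (x y : A ⧸ L),
    psi n Ω L w a (x + y) = psi n Ω L w a x + psi n Ω L w a y := by
  refine wt_rec (fun w ih => ?_)
  intro a x y
  cases w with
  | nil => simp [psi_nil, smul_add, Finsupp.single_add]
  | cons k w =>
    rw [psi_cons, psi_cons, psi_cons]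
    rw [ih w (wt_lt_cons k w) a x y, Finsupp.mapDomain_add]
    split
    · rw [Finset.sum_congr rfl (fun i _ => ih _ (wt_cw_lt' k i w) _ x y),
        Finset.sum_add_distrib]
      abel
    · abel

lemma psi_zerox (w : List ℕ) (a : A) : psi n Ω L w a 0 = 0 := by
  have := psi_addx (n := n) (Ω := Ω) (L := L) w a 0 0
  simpa using this.symm

lemma omega_zero (hΩadd : ∀ k a b, Ω k (a + b) = Ω k a + Ω k b) (k : ℕ) :
    Ω k (0 : A) = 0 := by
  have := hΩadd k 0 0
  simpa using this.symm

lemma psi_adda (hΩadd : ∀ k a b, Ω k (a + b) = Ω k a + Ω k b) :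
    ∀ (w : List ℕ) (a b : A) (x : A ⧸ L),
    psi n Ω L w (a + b) x = psi n Ω L w a x + psi n Ω L w b x := by
  refine wt_rec (fun w ih => ?_)
  intro a b x
  cases w with
  | nil => simp [psi_nil, add_smul, Finsupp.single_add]
  | cons k w =>
    rw [psi_cons, psi_cons, psi_cons]
    rw [ih w (wt_lt_cons k w) a b x, Finsupp.mapDomain_add]
    split
    · rw [Finset.sum_congr rfl (fun i _ => by
        rw [hΩadd, ih _ (wt_cw_lt' k i w) _ _ x]), Finset.sum_add_distrib]
      abel
    · abel

lemma psi_zeroa (hΩadd : ∀ k a b, Ω k (a + b) = Ω k a + Ω k b)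
    (w : List ℕ) (x : A ⧸ L) : psi n Ω L w 0 x = 0 := by
  have := psi_adda (n := n) hΩadd w 0 0 x
  simpa using this.symm


lemma psi_suma (hΩadd : ∀ k a b, Ω k (a + b) = Ω k a + Ω k b)
    {ι : Type*} (s : Finset ι) (c : ι → A) (w : List ℕ) (x : A ⧸ L) :
    psi n Ω L w (∑ i ∈ s, c i) x = ∑ i ∈ s, psi n Ω L w (c i) x := by
  classical
  induction s using Finset.induction_on with
  | empty => simp [psi_zeroa (n := n) hΩadd]
  | insert a s h ih =>
    rw [Finset.sum_insert h, Finset.sum_insert h, psi_adda (n := n) hΩadd, ih]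

lemma omega_one (hΩ0 : ∀ a : A, Ω 0 a = a)
    (hΩmul : ∀ k ≤ n, ∀ a b : A, Ω k (a * b) = ∑ i ∈ Finset.range (k + 1), Ω i a * Ω (k - i) b) :
    ∀ k, 1 ≤ k → k ≤ n → Ω k (1 : A) = 0 := by
  intro k
  induction k using Nat.strong_induction_on with
  | _ k ih =>
    intro hk1 hkn
    obtain ⟨k', rfl⟩ : ∃ k', k = k' + 1 := ⟨k - 1, by omega⟩
    have h := hΩmul (k' + 1) hkn 1 1
    rw [mul_one, Finset.sum_range_succ, Finset.sum_range_succ'] at h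
    have hmid : ∀ i ∈ Finset.range k', Ω (i + 1) (1 : A) * Ω (k' + 1 - (i + 1)) 1 = 0 := by
      intro i hi
      have hi' := Finset.mem_range.mp hi
      rw [ih (i + 1) (by omega) (by omega) (by omega), zero_mul]
    rw [Finset.sum_eq_zero hmid, hΩ0, Nat.sub_self, hΩ0, mul_one, one_mul, zero_add] at h
    nth_rewrite 1 [← add_zero (Ω (k' + 1) 1)] at h
    exact (add_left_cancel h).symm


lemma psi_one (hΩadd : ∀ k a b, Ω k (a + b) = Ω k a + Ω k b)
    (hΩ0 : ∀ a : A, Ω 0 a = a)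
    (hΩmul : ∀ k ≤ n, ∀ a b : A, Ω k (a * b) = ∑ i ∈ Finset.range (k + 1), Ω i a * Ω (k - i) b) :
    ∀ (w : List ℕ) (x : A ⧸ L), psi n Ω L w 1 x = Finsupp.single w x := by
  refine wt_rec (fun w ih => ?_)
  intro x
  cases w with
  | nil => simp [psi_nil]
  | cons k w =>
    rw [psi_cons, ih w (wt_lt_cons k w), Finsupp.mapDomain_single]
    split
    · next h =>
      have : ∀ i ∈ Finset.range k, psi n Ω L (cw (k - 1 - i) w) (Ω (i + 1) 1) x = 0 := by
        intro i hi
        have hi' := Finset.mem_range.mp hi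
        rw [omega_one hΩ0 hΩmul (i + 1) (by omega) (by omega),
          psi_zeroa (n := n) hΩadd]
      rw [Finset.sum_eq_zero this, sub_zero]
    · rw [sub_zero]

/-- the scalar action, as an additive hom -/
noncomputable def smA (a : A) : (List ℕ →₀ A ⧸ L) →+ (List ℕ →₀ A ⧸ L) :=
  Finsupp.liftAddHom (fun w =>
    AddMonoidHom.mk' (fun x => psi n Ω L w a x) (psi_addx w a))

variable (n Ω L) in
noncomputable def sm (a : A) (f : List ℕ →₀ A ⧸ L) : List ℕ →₀ A ⧸ L :=
  smA (n := n) (Ω := Ω) (L := L) a f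

lemma sm_single (a : A) (w : List ℕ) (x : A ⧸ L) :
    sm n Ω L a (Finsupp.single w x) = psi n Ω L w a x := by
  unfold sm smA
  rw [Finsupp.liftAddHom_apply_single]
  rfl

lemma sm_add (a : A) (f g : List ℕ →₀ A ⧸ L) :
    sm n Ω L a (f + g) = sm n Ω L a f + sm n Ω L a g :=
  (smA a).map_add f g

lemma sm_zero (a : A) : sm n Ω L a 0 = 0 := (smA a).map_zero

lemma sm_sub (a : A) (f g : List ℕ →₀ A ⧸ L) :
    sm n Ω L a (f - g) = sm n Ω L a f - sm n Ω L a g :=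
  (smA a).map_sub f g

lemma sm_sum (a : A) {ι : Type*} (s : Finset ι) (f : ι → (List ℕ →₀ A ⧸ L)) :
    sm n Ω L a (∑ i ∈ s, f i) = ∑ i ∈ s, sm n Ω L a (f i) :=
  map_sum (smA a) f s

/-- `mapdef`: the Leibniz identity on basis vectors -/
lemma mapdef (hΩ0 : ∀ a : A, Ω 0 a = a) {k : ℕ} (hk1 : 1 ≤ k) (hkn : k ≤ n)
    (w : List ℕ) (a : A) (x : A ⧸ L) :
    Finsupp.mapDomain (k :: ·) (psi n Ω L w a x) =
      ∑ i ∈ Finset.range (k + 1), psi n Ω L (cw (k - i) w) (Ω i a) x := by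
  rw [Finset.sum_range_succ']
  have h0 : psi n Ω L (cw (k - 0) w) (Ω 0 a) x = psi n Ω L (k :: w) a x := by
    rw [hΩ0]
    congr 1
    unfold cw
    rw [Nat.sub_zero, if_neg (by omega)]
  rw [h0, psi_cons, if_pos ⟨hk1, hkn⟩]
  have h1 : ∀ i, k - (i + 1) = k - 1 - i := by intro i; omega
  rw [Finset.sum_congr rfl (fun i _ => by rw [h1 i])]
  abel


noncomputable def md (m : ℕ) (f : List ℕ →₀ A ⧸ L) : List ℕ →₀ A ⧸ L :=
  if m = 0 then f else Finsupp.mapDomain (m :: ·) f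

lemma md_single (m : ℕ) (v : List ℕ) (y : A ⧸ L) :
    md (L := L) m (Finsupp.single v y) = Finsupp.single (cw m v) y := by
  unfold md cw
  split <;> simp [Finsupp.mapDomain_single]

lemma md_zero (m : ℕ) : md (L := L) m 0 = 0 := by
  unfold md; split <;> simp

lemma md_add (m : ℕ) (f g : List ℕ →₀ A ⧸ L) :
    md (L := L) m (f + g) = md (L := L) m f + md (L := L) m g := by
  unfold md; split <;> simp [Finsupp.mapDomain_add]

lemma sm_map_easy {k : ℕ} (hk : ¬(1 ≤ k ∧ k ≤ n)) (a : A) (g : List ℕ →₀ A ⧸ L) :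
    sm n Ω L a (Finsupp.mapDomain (k :: ·) g) =
      Finsupp.mapDomain (k :: ·) (sm n Ω L a g) := by
  induction g using Finsupp.induction_linear with
  | zero => simp [sm_zero]
  | add f g hf hg => rw [Finsupp.mapDomain_add, sm_add, hf, hg, sm_add, Finsupp.mapDomain_add]
  | single v y =>
    rw [Finsupp.mapDomain_single, sm_single, sm_single, psi_cons, if_neg hk, sub_zero]

lemma sm_map {k : ℕ} (hk1 : 1 ≤ k) (hkn : k ≤ n) (a : A) (g : List ℕ →₀ A ⧸ L) :
    sm n Ω L a (Finsupp.mapDomain (k :: ·) g) =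
      Finsupp.mapDomain (k :: ·) (sm n Ω L a g) -
        ∑ i ∈ Finset.range k, sm n Ω L (Ω (i + 1) a) (md (L := L) (k - 1 - i) g) := by
  induction g using Finsupp.induction_linear with
  | zero => simp [sm_zero, md_zero]
  | add f g hf hg =>
    rw [Finsupp.mapDomain_add, sm_add, hf, hg, sm_add, Finsupp.mapDomain_add]
    have e : ∀ i ∈ Finset.range k,
        sm n Ω L (Ω (i + 1) a) (md (L := L) (k - 1 - i) (f + g))
          = sm n Ω L (Ω (i + 1) a) (md (L := L) (k - 1 - i) f)
            + sm n Ω L (Ω (i + 1) a) (md (L := L) (k - 1 - i) g) := by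
      intro i _
      rw [md_add, sm_add]
    rw [Finset.sum_congr rfl e, Finset.sum_add_distrib]
    abel
  | single v y =>
    rw [Finsupp.mapDomain_single, sm_single, psi_cons, if_pos ⟨hk1, hkn⟩, sm_single]
    have e : ∀ i ∈ Finset.range k,
        sm n Ω L (Ω (i + 1) a) (md (L := L) (k - 1 - i) (Finsupp.single v y))
          = psi n Ω L (cw (k - 1 - i) v) (Ω (i + 1) a) y := by
      intro i _
      rw [md_single, sm_single]
    rw [Finset.sum_congr rfl e]

lemma md_psi (hΩ0 : ∀ a : A, Ω 0 a = a) {m : ℕ} (hm : m ≤ n) (w : List ℕ) (a : A) (x : A ⧸ L) :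
    md (L := L) m (psi n Ω L w a x) =
      ∑ q ∈ Finset.range (m + 1), psi n Ω L (cw (m - q) w) (Ω q a) x := by
  rcases Nat.eq_zero_or_pos m with hm0 | hm1
  · subst hm0
    unfold md
    rw [if_pos rfl]
    have h1 : cw 0 w = w := if_pos rfl
    simp only [Nat.zero_add, Finset.sum_range_one, Nat.sub_zero, h1]
    rw [hΩ0]
  · unfold md
    rw [if_neg (by omega)]
    exact mapdef hΩ0 hm1 hm w a x

lemma lemA {β : Type*} [AddCommMonoid β] (f : ℕ → ℕ → β) (k : ℕ) :
    ∑ t ∈ Finset.range k, ∑ i ∈ Finset.range (t + 1), f (t + 1 - i) i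
      = ∑ s ∈ Finset.range k, ∑ r ∈ Finset.range (k - s), f (s + 1) r := by
  induction k with
  | zero => simp
  | succ k ih =>
    rw [Finset.sum_range_succ, ih,
      Finset.sum_range_succ (f := fun s => ∑ r ∈ Finset.range (k + 1 - s), f (s + 1) r)]
    have e1 : ∑ r ∈ Finset.range (k + 1 - k), f (k + 1) r = f (k + 1) 0 := by
      rw [show k + 1 - k = 1 by omega]; simp
    have e2 : ∀ s ∈ Finset.range k,
        ∑ r ∈ Finset.range (k + 1 - s), f (s + 1) r
          = (∑ r ∈ Finset.range (k - s), f (s + 1) r) + f (s + 1) (k - s) := by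
      intro s hs; have hs' := Finset.mem_range.mp hs
      rw [show k + 1 - s = (k - s) + 1 by omega, Finset.sum_range_succ]
    have e3 : ∑ i ∈ Finset.range (k + 1), f (k + 1 - i) i
        = (∑ i ∈ Finset.range k, f (i + 1) (k - i)) + f (k + 1) 0 := by
      have h := Finset.sum_range_reflect (fun i => f (i + 1) (k - i)) (k + 1)
      have h2 : ∑ j ∈ Finset.range (k + 1), f (k + 1 - j) j
          = ∑ i ∈ Finset.range (k + 1), f (i + 1) (k - i) := by
        rw [← h]
        refine Finset.sum_congr rfl (fun j hj => ?_)
        have hj' := Finset.mem_range.mp hj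
        rw [show k + 1 - 1 - j + 1 = k + 1 - j by omega, show k - (k + 1 - 1 - j) = j by omega]
      rw [h2, Finset.sum_range_succ, Nat.sub_self]
    rw [Finset.sum_congr rfl e2, Finset.sum_add_distrib, e1, e3]
    abel


lemma key (hΩadd : ∀ k a b, Ω k (a + b) = Ω k a + Ω k b)
    (hΩ0 : ∀ a : A, Ω 0 a = a)
    (hΩmul : ∀ k ≤ n, ∀ a b : A, Ω k (a * b) = ∑ i ∈ Finset.range (k + 1), Ω i a * Ω (k - i) b) :
    ∀ (w : List ℕ) (a b : A) (x : A ⧸ L),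
      sm n Ω L a (psi n Ω L w b x) = psi n Ω L w (a * b) x := by
  refine wt_rec (fun w ih => ?_)
  intro a b x
  cases w with
  | nil => rw [psi_nil, sm_single, psi_nil, psi_nil, smul_smul]
  | cons k w =>
    by_cases hk : 1 ≤ k ∧ k ≤ n
    · obtain ⟨hk1, hkn⟩ := hk
      rw [psi_cons, if_pos ⟨hk1, hkn⟩, sm_sub, sm_sum, sm_map hk1 hkn,
        ih w (wt_lt_cons k w) a b x]
      have e4 : ∀ i ∈ Finset.range k,
          sm n Ω L a (psi n Ω L (cw (k - 1 - i) w) (Ω (i + 1) b) x)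
            = psi n Ω L (cw (k - 1 - i) w) (a * Ω (i + 1) b) x := by
        intro i _
        exact ih _ (wt_cw_lt' k i w) _ _ _
      rw [Finset.sum_congr rfl e4]
      have e5 : ∀ j ∈ Finset.range k,
          sm n Ω L (Ω (j + 1) a) (md (L := L) (k - 1 - j) (psi n Ω L w b x))
            = ∑ q ∈ Finset.range (k - j),
                psi n Ω L (cw (k - 1 - j - q) w) (Ω (j + 1) a * Ω q b) x := by
        intro j hj
        have hj' := Finset.mem_range.mp hj
        rw [md_psi hΩ0 (by omega : k - 1 - j ≤ n), sm_sum,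
          show k - 1 - j + 1 = k - j by omega]
        refine Finset.sum_congr rfl (fun q hq => ?_)
        have hq' := Finset.mem_range.mp hq
        refine ih _ ?_ _ _ _
        rw [show k - 1 - j - q = k - 1 - (j + q) by omega]
        exact wt_cw_lt' k (j + q) w
      rw [Finset.sum_congr rfl e5]
      rw [psi_cons (n := n) (Ω := Ω) (L := L) k w (a * b) x, if_pos ⟨hk1, hkn⟩]
      have e7 : ∀ i ∈ Finset.range k,
          psi n Ω L (cw (k - 1 - i) w) (Ω (i + 1) (a * b)) x
            = ∑ p ∈ Finset.range (i + 1 + 1),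
                psi n Ω L (cw (k - 1 - i) w) (Ω p a * Ω (i + 1 - p) b) x := by
        intro i hi
        have hi' := Finset.mem_range.mp hi
        rw [hΩmul (i + 1) (by omega), psi_suma hΩadd]
      rw [Finset.sum_congr rfl e7]
      have CC : ∑ i ∈ Finset.range k, ∑ p ∈ Finset.range (i + 1 + 1),
            psi n Ω L (cw (k - 1 - i) w) (Ω p a * Ω (i + 1 - p) b) x
          = (∑ j ∈ Finset.range k, ∑ q ∈ Finset.range (k - j),
              psi n Ω L (cw (k - 1 - j - q) w) (Ω (j + 1) a * Ω q b) x)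
            + ∑ i ∈ Finset.range k,
                psi n Ω L (cw (k - 1 - i) w) (a * Ω (i + 1) b) x := by
        have s1 : ∀ i ∈ Finset.range k,
            ∑ p ∈ Finset.range (i + 1 + 1),
              psi n Ω L (cw (k - 1 - i) w) (Ω p a * Ω (i + 1 - p) b) x
            = (∑ p ∈ Finset.range (i + 1),
                psi n Ω L (cw (k - 1 - i) w) (Ω (p + 1) a * Ω (i + 1 - (p + 1)) b) x)
              + psi n Ω L (cw (k - 1 - i) w) (Ω 0 a * Ω (i + 1 - 0) b) x := by
          intro i _
          exact Finset.sum_range_succ'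
            (fun p => psi n Ω L (cw (k - 1 - i) w) (Ω p a * Ω (i + 1 - p) b) x) (i + 1)
        rw [Finset.sum_congr rfl s1, Finset.sum_add_distrib]
        congr 1
        · -- double sum part
          have s2 : ∀ i ∈ Finset.range k,
              (∑ p ∈ Finset.range (i + 1),
                psi n Ω L (cw (k - 1 - i) w) (Ω (p + 1) a * Ω (i + 1 - (p + 1)) b) x)
              = ∑ p ∈ Finset.range (i + 1),
                  psi n Ω L (cw (k - (i + 1 - p) - p) w) (Ω (i + 1 - p) a * Ω p b) x := by
            intro i hi
            have hi' := Finset.mem_range.mp hi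
            have hrefl := Finset.sum_range_reflect
              (fun p => psi n Ω L (cw (k - 1 - i) w) (Ω (p + 1) a * Ω (i - p) b) x) (i + 1)
            calc
              ∑ p ∈ Finset.range (i + 1),
                  psi n Ω L (cw (k - 1 - i) w) (Ω (p + 1) a * Ω (i + 1 - (p + 1)) b) x
                = ∑ p ∈ Finset.range (i + 1),
                  psi n Ω L (cw (k - 1 - i) w) (Ω (p + 1) a * Ω (i - p) b) x := by
                  refine Finset.sum_congr rfl (fun p hp => ?_)
                  rw [show i + 1 - (p + 1) = i - p by omega]
              _ = ∑ p ∈ Finset.range (i + 1),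
                  psi n Ω L (cw (k - 1 - i) w)
                    (Ω (i + 1 - 1 - p + 1) a * Ω (i - (i + 1 - 1 - p)) b) x := hrefl.symm
              _ = ∑ p ∈ Finset.range (i + 1),
                  psi n Ω L (cw (k - (i + 1 - p) - p) w) (Ω (i + 1 - p) a * Ω p b) x := by
                  refine Finset.sum_congr rfl (fun p hp => ?_)
                  have hp' := Finset.mem_range.mp hp
                  rw [show i + 1 - 1 - p + 1 = i + 1 - p by omega,
                    show i - (i + 1 - 1 - p) = p by omega,
                    show k - 1 - i = k - (i + 1 - p) - p by omega]
          rw [Finset.sum_congr rfl s2]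
          have := lemA (fun p q => psi n Ω L (cw (k - p - q) w) (Ω p a * Ω q b) x) k
          rw [this]
          refine Finset.sum_congr rfl (fun s hs => ?_)
          refine Finset.sum_congr rfl (fun r hr => ?_)
          rw [show k - (s + 1) - r = k - 1 - s - r by omega]
        · refine Finset.sum_congr rfl (fun i hi => ?_)
          rw [hΩ0, Nat.sub_zero]
      rw [CC]
      abel
    · rw [psi_cons, if_neg hk, sub_zero, sm_map_easy hk,
        ih w (wt_lt_cons k w) a b x,
        psi_cons (n := n) (Ω := Ω) (L := L) k w (a * b) x, if_neg hk, sub_zero]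


lemma sm_one (hΩadd : ∀ k a b, Ω k (a + b) = Ω k a + Ω k b)
    (hΩ0 : ∀ a : A, Ω 0 a = a)
    (hΩmul : ∀ k ≤ n, ∀ a b : A, Ω k (a * b) = ∑ i ∈ Finset.range (k + 1), Ω i a * Ω (k - i) b)
    (f : List ℕ →₀ A ⧸ L) : sm n Ω L 1 f = f := by
  induction f using Finsupp.induction_linear with
  | zero => exact sm_zero 1
  | add f g hf hg => rw [sm_add, hf, hg]
  | single v y => rw [sm_single, psi_one hΩadd hΩ0 hΩmul]

lemma sm_mul (hΩadd : ∀ k a b, Ω k (a + b) = Ω k a + Ω k b)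
    (hΩ0 : ∀ a : A, Ω 0 a = a)
    (hΩmul : ∀ k ≤ n, ∀ a b : A, Ω k (a * b) = ∑ i ∈ Finset.range (k + 1), Ω i a * Ω (k - i) b)
    (a b : A) (f : List ℕ →₀ A ⧸ L) :
    sm n Ω L (a * b) f = sm n Ω L a (sm n Ω L b f) := by
  induction f using Finsupp.induction_linear with
  | zero => rw [sm_zero, sm_zero, sm_zero]
  | add f g hf hg => rw [sm_add, hf, hg, sm_add, sm_add]
  | single v y => rw [sm_single, sm_single, key hΩadd hΩ0 hΩmul]

lemma sm_adda (hΩadd : ∀ k a b, Ω k (a + b) = Ω k a + Ω k b)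
    (a b : A) (f : List ℕ →₀ A ⧸ L) :
    sm n Ω L (a + b) f = sm n Ω L a f + sm n Ω L b f := by
  induction f using Finsupp.induction_linear with
  | zero => rw [sm_zero, sm_zero, sm_zero, add_zero]
  | add f g hf hg =>
    rw [sm_add, hf, hg, sm_add, sm_add]
    abel
  | single v y => rw [sm_single, sm_single, sm_single, psi_adda (n := n) hΩadd]

lemma sm_zeroa (hΩadd : ∀ k a b, Ω k (a + b) = Ω k a + Ω k b)
    (f : List ℕ →₀ A ⧸ L) : sm n Ω L 0 f = 0 := by
  induction f using Finsupp.induction_linear with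
  | zero => exact sm_zero 0
  | add f g hf hg => rw [sm_add, hf, hg, add_zero]
  | single v y => rw [sm_single, psi_zeroa (n := n) hΩadd]

/-- Leibniz rule for the shift operators `md`. -/
lemma leib (hΩ0 : ∀ a : A, Ω 0 a = a) {k : ℕ} (hk : k ≤ n) (a : A) (f : List ℕ →₀ A ⧸ L) :
    md (L := L) k (sm n Ω L a f)
      = ∑ i ∈ Finset.range (k + 1), sm n Ω L (Ω i a) (md (L := L) (k - i) f) := by
  induction f using Finsupp.induction_linear with
  | zero => simp [sm_zero, md_zero]
  | add f g hf hg =>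
    rw [sm_add, md_add, hf, hg]
    have e : ∀ i ∈ Finset.range (k + 1),
        sm n Ω L (Ω i a) (md (L := L) (k - i) (f + g))
          = sm n Ω L (Ω i a) (md (L := L) (k - i) f)
            + sm n Ω L (Ω i a) (md (L := L) (k - i) g) := by
      intro i _
      rw [md_add, sm_add]
    rw [Finset.sum_congr rfl e, Finset.sum_add_distrib]
  | single v y =>
    rw [sm_single, md_psi hΩ0 hk]
    refine Finset.sum_congr rfl (fun i _ => ?_)
    rw [md_single, sm_single]

end Defs

/-- the module carrier, as a type synonym to avoid instance clashes -/
def MM (L : Submodule A A) : Type u := List ℕ →₀ (A ⧸ L)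

noncomputable instance (L : Submodule A A) : AddCommGroup (MM L) :=
  inferInstanceAs (AddCommGroup (List ℕ →₀ A ⧸ L))

noncomputable def mdM (L : Submodule A A) (k : ℕ) (f : MM L) : MM L :=
  md (L := L) k f

noncomputable def mmModule (n : ℕ) (Ω : ℕ → A → A) (L : Submodule A A)
    (hΩadd : ∀ k a b, Ω k (a + b) = Ω k a + Ω k b)
    (hΩ0 : ∀ a : A, Ω 0 a = a)
    (hΩmul : ∀ k ≤ n, ∀ a b : A, Ω k (a * b) = ∑ i ∈ Finset.range (k + 1), Ω i a * Ω (k - i) b) :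
    Module A (MM L) where
  smul a f := sm n Ω L a f
  one_smul f := sm_one hΩadd hΩ0 hΩmul f
  mul_smul a b f := sm_mul hΩadd hΩ0 hΩmul a b f
  smul_zero a := sm_zero a
  smul_add a f g := sm_add a f g
  add_smul a b f := sm_adda hΩadd a b f
  zero_smul f := sm_zeroa hΩadd f



section DmDef
variable (Ω : ℕ → A → A)

noncomputable def Dm : ℕ → A → A
  | 0, a => a
  | t + 1, a => -∑ i ∈ (Finset.range (t + 1)).attach, Dm i.1 (Ω (t + 1 - i.1) a)
  termination_by t => t
  decreasing_by exact Finset.mem_range.mp i.2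

lemma Dm_zero (a : A) : Dm Ω 0 a = a := by rw [Dm]

lemma Dm_succ (t : ℕ) (a : A) :
    Dm Ω (t + 1) a = -∑ i ∈ Finset.range (t + 1), Dm Ω i (Ω (t + 1 - i) a) := by
  rw [Dm, ← Finset.sum_attach (Finset.range (t + 1)) (fun i => Dm Ω i (Ω (t + 1 - i) a))]

end DmDef

section Dlems

variable (n : ℕ) (Ω : ℕ → A → A) (L : Submodule A A)

variable {n Ω L}

lemma omegaD (hΩadd : ∀ k a b, Ω k (a + b) = Ω k a + Ω k b)
    (hΩ0 : ∀ a : A, Ω 0 a = a) :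
    ∀ j, 1 ≤ j → ∀ a : A, ∑ t ∈ Finset.range (j + 1), Ω (j - t) (Dm Ω t a) = 0 := by
  intro j
  induction j using Nat.strong_induction_on with
  | _ j ih =>
    intro hj1 a
    rw [Finset.sum_range_succ']
    have e1 : ∀ t ∈ Finset.range j,
        Ω (j - (t + 1)) (Dm Ω (t + 1) a)
          = -∑ i ∈ Finset.range (t + 1), Ω (j - (t + 1)) (Dm Ω i (Ω (t + 1 - i) a)) := by
      intro t _
      rw [Dm_succ]
      have hF := AddMonoidHom.mk' (Ω (j - (t + 1))) (hΩadd (j - (t + 1)))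
      rw [show Ω (j - (t + 1)) (-∑ i ∈ Finset.range (t + 1), Dm Ω i (Ω (t + 1 - i) a))
          = (AddMonoidHom.mk' (Ω (j - (t + 1))) (hΩadd (j - (t + 1))))
              (-∑ i ∈ Finset.range (t + 1), Dm Ω i (Ω (t + 1 - i) a)) from rfl,
        map_neg, map_sum]
      rfl
    rw [Finset.sum_congr rfl e1, Finset.sum_neg_distrib]
    have e2 : ∀ t ∈ Finset.range j,
        ∑ i ∈ Finset.range (t + 1), Ω (j - (t + 1)) (Dm Ω i (Ω (t + 1 - i) a))
          = ∑ i ∈ Finset.range (t + 1),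
              (fun s r => Ω (j - s - r) (Dm Ω r (Ω s a))) (t + 1 - i) i := by
      intro t ht
      refine Finset.sum_congr rfl (fun i hi => ?_)
      have hi' := Finset.mem_range.mp hi
      simp only
      rw [show j - (t + 1 - i) - i = j - (t + 1) by omega]
    rw [Finset.sum_congr rfl e2, lemA (fun s r => Ω (j - s - r) (Dm Ω r (Ω s a))) j]
    have e3 : ∑ s ∈ Finset.range j, ∑ r ∈ Finset.range (j - s),
        (fun s r => Ω (j - s - r) (Dm Ω r (Ω s a))) (s + 1) r = Ω j a := by
      rw [Finset.sum_eq_single (j - 1)]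
      · have : j - 1 + 1 = j := by omega
        rw [show j - (j - 1) = 1 by omega, Finset.sum_range_one]
        simp only
        rw [this, Dm_zero, show j - j - 0 = 0 by omega, hΩ0]
      · intro s hs hne
        have hs' := Finset.mem_range.mp hs
        have h1 : 1 ≤ j - s - 1 := by omega
        have := ih (j - s - 1) (by omega) h1 (Ω (s + 1) a)
        rw [← this]
        rw [show j - s = j - s - 1 + 1 by omega]
        refine Finset.sum_congr rfl (fun r hr => ?_)
        simp only
        congr 1
      · intro h
        exact absurd (Finset.mem_range.mpr (by omega)) h
    rw [e3, Nat.sub_zero, Dm_zero]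
    abel

end Dlems


section Letter

variable {n : ℕ} {Ω : ℕ → A → A} {L : Submodule A A}

lemma psi_letter (hΩ0 : ∀ a : A, Ω 0 a = a) :
    ∀ k, 1 ≤ k → k ≤ n → ∀ (a : A) (x : A ⧸ L),
    psi n Ω L [k] a x
      = ∑ t ∈ Finset.range (k + 1), Finsupp.single (cw (k - t) []) (Dm Ω t a • x) := by
  intro k
  induction k using Nat.strong_induction_on with
  | _ k ih =>
    intro hk1 hkn a x
    rw [show ([k] : List ℕ) = k :: [] from rfl, psi_cons, if_pos ⟨hk1, hkn⟩, psi_nil,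
      Finsupp.mapDomain_single]
    have e : ∀ i ∈ Finset.range k,
        psi n Ω L (cw (k - 1 - i) []) (Ω (i + 1) a) x
          = ∑ t ∈ Finset.range (k - 1 - i + 1),
              Finsupp.single (cw (k - 1 - i - t) []) (Dm Ω t (Ω (i + 1) a) • x) := by
      intro i hi
      have hi' := Finset.mem_range.mp hi
      rcases Nat.eq_zero_or_pos (k - 1 - i) with h0 | h1
      · rw [h0, show cw 0 [] = [] from if_pos rfl, psi_nil]
        rw [show (0 : ℕ) + 1 = 1 from rfl, Finset.sum_range_one,
          show (0 : ℕ) - 0 = 0 from rfl, show cw 0 [] = [] from if_pos rfl, Dm_zero]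
      · rw [show cw (k - 1 - i) [] = [k - 1 - i] from if_neg (by omega)]
        exact ih (k - 1 - i) (by omega) (by omega) (by omega) _ x
    rw [Finset.sum_congr rfl e]
    have eR : ∑ t ∈ Finset.range (k + 1), Finsupp.single (cw (k - t) []) (Dm Ω t a • x)
        = (∑ t ∈ Finset.range k, Finsupp.single (cw (k - (t + 1)) []) (Dm Ω (t + 1) a • x))
          + Finsupp.single (cw (k - 0) []) (Dm Ω 0 a • x) :=
      Finset.sum_range_succ' _ k
    have eR2 : ∀ t ∈ Finset.range k,
        Finsupp.single (cw (k - (t + 1)) []) (Dm Ω (t + 1) a • x)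
          = -∑ i ∈ Finset.range (t + 1),
              Finsupp.single (cw (k - (t + 1)) []) (Dm Ω i (Ω (t + 1 - i) a) • x) := by
      intro t _
      rw [Dm_succ, neg_smul, Finset.sum_smul, Finsupp.single_neg, Finsupp.single_finset_sum]
    rw [eR, Finset.sum_congr rfl eR2, Finset.sum_neg_distrib, Nat.sub_zero, Dm_zero,
      show cw k [] = [k] from if_neg (by omega)]
    have e2 : ∀ t ∈ Finset.range k,
        ∑ i ∈ Finset.range (t + 1),
            Finsupp.single (cw (k - (t + 1)) []) (Dm Ω i (Ω (t + 1 - i) a) • x)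
          = ∑ i ∈ Finset.range (t + 1),
              (fun s r => Finsupp.single (cw (k - s - r) []) (Dm Ω r (Ω s a) • x)) (t + 1 - i) i := by
      intro t ht
      refine Finset.sum_congr rfl (fun i hi => ?_)
      have hi' := Finset.mem_range.mp hi
      simp only
      rw [show k - (t + 1 - i) - i = k - (t + 1) by omega]
    rw [Finset.sum_congr rfl e2,
      lemA (fun s r => Finsupp.single (cw (k - s - r) []) (Dm Ω r (Ω s a) • x)) k]
    have e3 : ∀ i ∈ Finset.range k,
        ∑ t ∈ Finset.range (k - 1 - i + 1),
            Finsupp.single (cw (k - 1 - i - t) []) (Dm Ω t (Ω (i + 1) a) • x)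
          = ∑ r ∈ Finset.range (k - i),
              (fun s r => Finsupp.single (cw (k - s - r) []) (Dm Ω r (Ω s a) • x)) (i + 1) r := by
      intro i hi
      have hi' := Finset.mem_range.mp hi
      rw [show k - 1 - i + 1 = k - i by omega]
      refine Finset.sum_congr rfl (fun r hr => ?_)
      simp only
      rw [show k - 1 - i - r = k - (i + 1) - r by omega]
    rw [Finset.sum_congr rfl e3]
    abel

end Letter


lemma cw_nil_inj {p q : ℕ} (h : cw p [] = cw q []) : p = q := by
  unfold cw at h
  by_cases hp : p = 0 <;> by_cases hq : q = 0 <;>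
    simp [hp, hq] at h <;> omega

end Stmt16


/-- If every higher `Ω`-derivation of order `n` on every `A`-module preserves the torsion
submodule of the hereditary torsion theory `τ` corresponding to the Gabriel filter `ℒ`, then
`ℒ` is `Ω`-invariant of order `n`: for every `I ∈ ℒ` there is `K ∈ ℒ` with `Ω j (K) ⊆ I`
for all `j = 0, 1, …, n`. -/
theorem stmt_16 {A : Type u} [Ring A] (n : ℕ)
    (ℒ : Set (Submodule A A))
    (hIL : ∀ I : Submodule A A, I ∈ ℒ ↔
      ∀ x : A ⧸ I, annIdeal A x ∈ ℒ)
    (Ω : ℕ → A → A)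
    (hΩadd : ∀ k a b, Ω k (a + b) = Ω k a + Ω k b)
    (hΩ0 : ∀ a, Ω 0 a = a)
    (hΩmul : ∀ k ≤ n, ∀ a b : A,
      Ω k (a * b) = ∑ i ∈ Finset.range (k + 1), Ω i a * Ω (k - i) b)
    (hdiff : ∀ (M : ModuleCat.{u} A) (Ψ : ℕ → M → M),
      (∀ k m m', Ψ k (m + m') = Ψ k m + Ψ k m') →
      (∀ m, Ψ 0 m = m) →
      (∀ k ≤ n, ∀ (a : A) (m : M),
        Ψ k (a • m) = ∑ i ∈ Finset.range (k + 1), Ω i a • Ψ (k - i) m) →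
      ∀ i ≤ n, ∀ m : M, annIdeal A m ∈ ℒ → annIdeal A (Ψ i m) ∈ ℒ) :
    ∀ I ∈ ℒ, ∃ K ∈ ℒ, ∀ j ≤ n, ∀ x ∈ K, Ω j x ∈ I := by
  classical
  have H : ∀ r, r ≤ n → ∀ I, I ∈ ℒ → ∃ K ∈ ℒ, ∀ j ≤ r, ∀ x ∈ K, Ω j x ∈ I := by
    intro r
    induction r with
    | zero =>
      intro _ I hI
      refine ⟨I, hI, ?_⟩
      intro j hj x hx
      have hj0 : j = 0 := Nat.le_zero.mp hj
      subst hj0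
      rw [hΩ0]
      exact hx
    | succ r ih =>
      intro hrn I hI
      obtain ⟨L, hL, hLI⟩ := ih (by omega) I hI
      letI : Module A (Stmt16.MM L) := Stmt16.mmModule n Ω L hΩadd hΩ0 hΩmul
      have hsmul : ∀ (a : A) (f : Stmt16.MM L), a • f = Stmt16.sm n Ω L a f :=
        fun a f => rfl
      have hmem : ∀ (m : Stmt16.MM L) (a : A),
          a ∈ annIdeal A m ↔ Stmt16.sm n Ω L a m = 0 := by
        intro m a
        rw [annIdeal, LinearMap.mem_ker, LinearMap.toSpanSingleton_apply, hsmul]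
        exact Iff.rfl
      set m₀ : Stmt16.MM L := Finsupp.single [] (Submodule.Quotient.mk 1) with hm₀
      have c1 : ∀ (k : ℕ) (m m' : Stmt16.MM L),
          Stmt16.mdM L k (m + m') = Stmt16.mdM L k m + Stmt16.mdM L k m' :=
        fun k m m' => Stmt16.md_add k m m'
      have c2 : ∀ m : Stmt16.MM L, Stmt16.mdM L 0 m = m := by
        intro m
        show (if (0 : ℕ) = 0 then m else Finsupp.mapDomain ((0 : ℕ) :: ·) m) = m
        exact if_pos rfl
      have c3 : ∀ k ≤ n, ∀ (a : A) (m : Stmt16.MM L),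
          Stmt16.mdM L k (a • m)
            = ∑ i ∈ Finset.range (k + 1), Ω i a • Stmt16.mdM L (k - i) m := by
        intro k hk a m
        show Stmt16.md (L := L) k (Stmt16.sm n Ω L a m)
          = ∑ i ∈ Finset.range (k + 1), Stmt16.sm n Ω L (Ω i a) (Stmt16.md (L := L) (k - i) m)
        exact Stmt16.leib hΩ0 hk a m
      have hann0 : annIdeal A m₀ = L := by
        ext a
        rw [hmem, hm₀, Stmt16.sm_single, Stmt16.psi_nil,
          show (a • (Submodule.Quotient.mk 1 : A ⧸ L)) = Submodule.Quotient.mk a by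
            rw [← Submodule.Quotient.mk_smul, smul_eq_mul, mul_one],
          Finsupp.single_eq_zero, Submodule.Quotient.mk_eq_zero]
      have hK := hdiff (ModuleCat.of A (Stmt16.MM L)) (Stmt16.mdM L)
        c1 c2 c3 (r + 1) hrn m₀ (by rw [hann0]; exact hL)
      refine ⟨_, hK, ?_⟩
      intro j hj a haK
      have hΨm : Stmt16.mdM L (r + 1) m₀
          = (Finsupp.single [r + 1] (Submodule.Quotient.mk 1) : Stmt16.MM L) := by
        show (if r + 1 = 0 then
            (Finsupp.single [] (Submodule.Quotient.mk 1) : List ℕ →₀ A ⧸ L)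
          else Finsupp.mapDomain ((r + 1) :: ·)
            (Finsupp.single [] (Submodule.Quotient.mk 1)))
          = Finsupp.single [r + 1] (Submodule.Quotient.mk 1)
        rw [if_neg (Nat.succ_ne_zero r), Finsupp.mapDomain_single]
      have ha : Stmt16.sm n Ω L a (Finsupp.single [r + 1] (Submodule.Quotient.mk 1)) = 0 := by
        have h1 := (hmem _ a).mp haK
        beta_reduce at h1
        rw [hΨm] at h1
        exact h1
      have hpsi : Stmt16.psi n Ω L [r + 1] a (Submodule.Quotient.mk 1) = 0 := by
        rw [← Stmt16.sm_single]
        exact ha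
      rw [Stmt16.psi_letter hΩ0 (r + 1) (by omega) hrn] at hpsi
      have hDm : ∀ t, t ≤ r + 1 → Stmt16.Dm Ω t a ∈ L := by
        intro t ht
        have happ := congrArg (fun F : (List ℕ →₀ A ⧸ L) => F (Stmt16.cw (r + 1 - t) [])) hpsi
        simp only [Finsupp.coe_zero, Pi.zero_apply] at happ
        rw [Finsupp.finset_sum_apply] at happ
        rw [Finset.sum_eq_single t] at happ
        · rw [Finsupp.single_eq_same] at happ
          rw [show (Stmt16.Dm Ω t a • (Submodule.Quotient.mk 1 : A ⧸ L))
              = Submodule.Quotient.mk (Stmt16.Dm Ω t a) by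
            rw [← Submodule.Quotient.mk_smul, smul_eq_mul, mul_one]] at happ
          exact (Submodule.Quotient.mk_eq_zero L).mp happ
        · intro t' ht' hne
          have ht'' := Finset.mem_range.mp ht'
          rw [Finsupp.single_apply, if_neg ?_]
          intro hcw
          have := Stmt16.cw_nil_inj hcw
          omega
        · intro hnot
          exact absurd (Finset.mem_range.mpr (by omega)) hnot
      rcases Nat.eq_zero_or_pos j with hj0 | hj1
      · subst hj0
        rw [hΩ0]
        have h1 : a ∈ L := by
          have := hDm 0 (by omega)
          rwa [Stmt16.Dm_zero] at this
        have h2 := hLI 0 (Nat.zero_le r) a h1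
        rwa [hΩ0] at h2
      · have hsum := Stmt16.omegaD hΩadd hΩ0 j hj1 a
        rw [Finset.sum_range_succ', Nat.sub_zero, Stmt16.Dm_zero] at hsum
        have heq : Ω j a
            = -∑ t ∈ Finset.range j, Ω (j - (t + 1)) (Stmt16.Dm Ω (t + 1) a) :=
          eq_neg_of_add_eq_zero_right hsum
        rw [heq]
        refine Submodule.neg_mem _ (Submodule.sum_mem _ (fun t ht => ?_))
        have ht' := Finset.mem_range.mp ht
        have h1 : Stmt16.Dm Ω (t + 1) a ∈ L := hDm (t + 1) (by omega)
        exact hLI (j - (t + 1)) (by omega) _ h1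
  intro I hI
  exact H n le_rfl I hI
end

section
/- Let τ be a hereditary torsion theory on left A-modules such that every higher Ω-derivation D of order n on any A-module M extends to a higher Ω-derivation D̃ on Q_τ(M) satisfying D̃_i ∘ Φ_M = Φ_M ∘ D_i for all i. Then τ is higher differential of order n: D_i(τ(M)) ⊆ τ(M) for every M, every higher Ω-derivation D on M, and all 0 ≤ i ≤ n. -/
universe u

/-- If every higher `Ω`-derivation `D` of order `n` on any `A`-module `M` extends to a higher
`Ω`-derivation `D'` on the module of quotients `Q_τ(M)` (a τ-torsion-free module `Q` with a
map `Φ : M → Q` whose kernel is `τ(M)` and whose cokernel is τ-torsion) satisfying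
`D' i ∘ Φ = Φ ∘ D i`, then `τ` is higher differential of order `n`:
`D i (τ(M)) ⊆ τ(M)` for every `M`, every higher `Ω`-derivation `D`, and all `0 ≤ i ≤ n`. -/
theorem stmt_18 {A : Type u} [Ring A] (n : ℕ)
    (ℒ : Set (Submodule A A))
    (Ω : ℕ → A → A)
    (hΩadd : ∀ k a b, Ω k (a + b) = Ω k a + Ω k b)
    (hΩ0 : ∀ a, Ω 0 a = a)
    (hΩmul : ∀ k ≤ n, ∀ a b : A,
      Ω k (a * b) = ∑ i ∈ Finset.range (k + 1), Ω i a * Ω (k - i) b)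
    (hext : ∀ (M : ModuleCat.{u} A) (D : ℕ → M → M),
      (∀ k m m', D k (m + m') = D k m + D k m') →
      (∀ m, D 0 m = m) →
      (∀ k ≤ n, ∀ (a : A) (m : M),
        D k (a • m) = ∑ i ∈ Finset.range (k + 1), Ω i a • D (k - i) m) →
      ∃ (Q : ModuleCat.{u} A) (Φ : M →ₗ[A] Q) (D' : ℕ → Q → Q),
        (∀ m : M, Φ m = 0 ↔ annIdeal A m ∈ ℒ) ∧
        (∀ q : Q, annIdeal A q ∈ ℒ → q = 0) ∧
        (∀ q : Q,
          Submodule.comap (LinearMap.toSpanSingleton A Q q) (LinearMap.range Φ) ∈ ℒ) ∧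
        (∀ k q q', D' k (q + q') = D' k q + D' k q') ∧
        (∀ q, D' 0 q = q) ∧
        (∀ k ≤ n, ∀ (a : A) (q : Q),
          D' k (a • q) = ∑ i ∈ Finset.range (k + 1), Ω i a • D' (k - i) q) ∧
        (∀ i ≤ n, ∀ m : M, D' i (Φ m) = Φ (D i m))) :
    ∀ (M : ModuleCat.{u} A) (D : ℕ → M → M),
      (∀ k m m', D k (m + m') = D k m + D k m') →
      (∀ m, D 0 m = m) →
      (∀ k ≤ n, ∀ (a : A) (m : M),
        D k (a • m) = ∑ i ∈ Finset.range (k + 1), Ω i a • D (k - i) m) →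
      ∀ i ≤ n, ∀ m : M, annIdeal A m ∈ ℒ → annIdeal A (D i m) ∈ ℒ := by
  intro M D hadd h0 hmul i hi m hm
  obtain ⟨Q, Φ, D', hker, _, _, hDadd, _, _, hcomm⟩ := hext M D hadd h0 hmul
  have hΦm : Φ m = 0 := (hker m).mpr hm
  have hD'0 : D' i 0 = 0 := by
    have := hDadd i 0 0
    rw [add_zero] at this
    exact left_eq_add.mp this
  have : Φ (D i m) = 0 := by
    rw [← hcomm i hi m, hΦm, hD'0]
  exact (hker (D i m)).mp this
end
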